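/- Let φ : V → V' be a rough isometry between networks G and G' with bounded local geometry. Then there exists a constant C > 0 such that for every pair of vertex sets A, B ⊆ V, the free effective conductances satisfy C^F_eff(A ↔ B; G) ≤ C · C^F_eff(φ(A) ↔ φ(B); G'). -/

import Mathlib

open scoped Classical

open ENNReal

/-- The Dirichlet energy of a function on a network. -/
noncomputable def dirichletEnergy {V : Type*} (G : SimpleGraph V) (c : V → V → ℝ)
    (f : V → ℝ) : ℝ≥0∞ :=
  (1 / 2) * ∑' p : V × V,
    if G.Adj p.1 p.2 then ENNReal.ofReal (c p.1 p.2 * (f p.1 - f p.2) ^ 2) else 0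

/-- The free effective conductance between vertex sets `A` and `B`:
the infimum of Dirichlet energies of functions equal to 1 on `A` and 0 on `B`. -/
noncomputable def freeEffCond {V : Type*} (G : SimpleGraph V) (c : V → V → ℝ)
    (A B : Set V) : ℝ≥0∞ :=
  ⨅ (F : V → ℝ) (_ : ∀ a ∈ A, F a = 1) (_ : ∀ b ∈ B, F b = 0), dirichletEnergy G c F

/-! ### Auxiliary lemmas -/

lemma list_sq_sum_le (l : List ℝ) :
    l.sum ^ 2 ≤ (l.length : ℝ) * (l.map (· ^ 2)).sum := by
  have h1 : l.sum = ∑ i : Fin l.length, l[(i : ℕ)] := (Fin.sum_univ_getElem l).symm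
  have h2 : (l.map (· ^ 2)).sum = ∑ i : Fin l.length, l[(i : ℕ)] ^ 2 :=
    (Fin.sum_univ_fun_getElem l (· ^ 2)).symm
  have h3 := sq_sum_le_card_mul_sum_sq (s := (Finset.univ : Finset (Fin l.length)))
    (f := fun i => l[(i : ℕ)])
  rw [h1, h2]
  simpa using h3

lemma walk_telescope {V : Type*} {G : SimpleGraph V} (f : V → ℝ) :
    ∀ {x y : V} (w : G.Walk x y),
      f x - f y = (w.darts.map (fun d => f d.fst - f d.snd)).sum := by
  intro x y w
  induction w with
  | nil => simp
  | cons h p ih =>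
      simp only [SimpleGraph.Walk.darts_cons, List.map_cons, List.sum_cons, ← ih]; ring

lemma tsum_list_ite {X Y : Type*} (l : List X) (m : X → Y) (g : Y → ℝ≥0∞)
    (inst : ∀ (a : X) (y : Y), Decidable (m a = y)) :
    ∑' y, (l.map (fun a => @ite _ (m a = y) (inst a y) (g y) 0)).sum
      = (l.map (g ∘ m)).sum := by
  induction l with
  | nil => simp
  | cons a t ih =>
      simp only [List.map_cons, List.sum_cons]
      rw [ENNReal.tsum_add, ih]
      congr 1
      rw [tsum_eq_single (m a)
        (by intro y hy; exact if_neg (fun h => hy h.symm))]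
      rw [if_pos rfl]
      rfl

lemma ofReal_list_sum (l : List ℝ) (h : ∀ x ∈ l, 0 ≤ x) :
    ENNReal.ofReal l.sum = (l.map ENNReal.ofReal).sum := by
  induction l with
  | nil => simp
  | cons a t ih =>
      simp only [List.sum_cons, List.map_cons]
      rw [ENNReal.ofReal_add (h a (by simp)) (List.sum_nonneg (fun x hx => h x (by simp [hx]))),
        ih (fun x hx => h x (by simp [hx]))]

lemma list_sum_le_length_mul {X : Type*} (l : List X) (h : X → ℝ≥0∞) (B : ℝ≥0∞)
    (hb : ∀ x ∈ l, h x ≤ B) : (l.map h).sum ≤ (l.length : ℝ≥0∞) * B := by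
  induction l with
  | nil => simp
  | cons a t ih =>
      simp only [List.map_cons, List.sum_cons, List.length_cons]
      calc h a + (t.map h).sum ≤ B + (t.length : ℝ≥0∞) * B :=
            add_le_add (hb a (by simp)) (ih (fun x hx => hb x (by simp [hx])))
        _ = ((t.length + 1 : ℕ) : ℝ≥0∞) * B := by
            push_cast; ring

lemma exists_penultimate {V : Type*} {G : SimpleGraph V} (hG : G.Connected) {u₀ u : V} {r : ℕ}
    (h : G.dist u₀ u = r + 1) : ∃ v, G.dist u₀ v ≤ r ∧ G.Adj v u := by
  obtain ⟨w, hw⟩ := hG.exists_walk_length_eq_dist u₀ u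
  rw [h] at hw
  cases hwr : w.reverse with
  | nil =>
      have := congrArg SimpleGraph.Walk.length hwr
      rw [SimpleGraph.Walk.length_reverse, hw] at this
      simp at this
  | cons hadj p =>
      rename_i v
      have hlen : p.length = r := by
        have := congrArg SimpleGraph.Walk.length hwr
        rw [SimpleGraph.Walk.length_reverse, hw] at this
        simpa using this.symm
      refine ⟨v, ?_, hadj.symm⟩
      calc G.dist u₀ v ≤ p.reverse.length := SimpleGraph.dist_le _
        _ = r := by rw [SimpleGraph.Walk.length_reverse, hlen]

lemma ball_card {V : Type*} [DecidableEq V] {G : SimpleGraph V} [∀ v, Fintype (G.neighborSet v)]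
    (hG : G.Connected) (D : ℕ) (hdeg : ∀ v, G.degree v ≤ D) (u₀ : V) :
    ∀ r : ℕ, ∃ s : Finset V, (∀ u, G.dist u₀ u ≤ r → u ∈ s) ∧ s.card ≤ (D + 1) ^ r := by
  intro r
  induction r with
  | zero =>
      refine ⟨{u₀}, fun u hu => ?_, by simp⟩
      have : G.dist u₀ u = 0 := Nat.le_zero.mp hu
      rw [hG.dist_eq_zero_iff] at this
      simp [this]
  | succ r ih =>
      obtain ⟨s, hs, hcard⟩ := ih
      refine ⟨s.biUnion (fun v => insert v (G.neighborFinset v)), ?_, ?_⟩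
      · intro u hu
        rcases Nat.lt_or_ge (G.dist u₀ u) (r + 1) with h | h
        · exact Finset.mem_biUnion.mpr ⟨u, hs u (Nat.lt_succ_iff.mp h), by simp⟩
        · have heq : G.dist u₀ u = r + 1 := le_antisymm hu h
          obtain ⟨v, hv, hadj⟩ := exists_penultimate hG heq
          exact Finset.mem_biUnion.mpr ⟨v, hs v hv,
            Finset.mem_insert.mpr (Or.inr ((G.mem_neighborFinset v u).mpr hadj))⟩
      · calc (s.biUnion _).card ≤ ∑ v ∈ s, (insert v (G.neighborFinset v)).card :=
              Finset.card_biUnion_le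
          _ ≤ ∑ v ∈ s, (D + 1) := by
              refine Finset.sum_le_sum fun v _ => ?_
              calc (insert v (G.neighborFinset v)).card
                  ≤ (G.neighborFinset v).card + 1 := Finset.card_insert_le _ _
                _ ≤ D + 1 := by
                    have := hdeg v
                    rw [SimpleGraph.degree] at this
                    omega
          _ = s.card * (D + 1) := by rw [Finset.sum_const, smul_eq_mul]
          _ ≤ (D + 1) ^ r * (D + 1) := Nat.mul_le_mul_right _ hcard
          _ = (D + 1) ^ (r + 1) := (pow_succ _ _).symm

lemma dist_start_dart_fst_le {V : Type*} [DecidableEq V] {G : SimpleGraph V} {x y : V}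
    (w : G.Walk x y) {d : G.Dart} (hd : d ∈ w.darts) : G.dist x d.fst ≤ w.length := by
  have hsup : d.fst ∈ w.support := SimpleGraph.Walk.dart_fst_mem_support_of_mem_darts w hd
  calc G.dist x d.fst ≤ (w.takeUntil d.fst hsup).length := SimpleGraph.dist_le _
    _ ≤ w.length := SimpleGraph.Walk.length_takeUntil_le w hsup

/-- If `φ` is a rough isometry between networks with bounded local geometry,
there is `C > 0` with `C^F_eff(A ↔ B; G) ≤ C · C^F_eff(φ(A) ↔ φ(B); G')` for all `A, B`. -/
theorem freeEffCond_roughIsometry_le {V V' : Type*}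
    (G : SimpleGraph V) (G' : SimpleGraph V')
    (hG : G.Connected) (hG' : G'.Connected)
    [∀ v, Fintype (G.neighborSet v)] [∀ v', Fintype (G'.neighborSet v')]
    (c : V → V → ℝ) (c' : V' → V' → ℝ)
    (hcsymm : ∀ u v, c u v = c v u) (hcsymm' : ∀ u v, c' u v = c' v u)
    (M : ℝ) (hM : 1 ≤ M)
    (hdeg : ∀ v, (G.degree v : ℝ) ≤ M) (hdeg' : ∀ v', (G'.degree v' : ℝ) ≤ M)
    (hc : ∀ u v, G.Adj u v → M⁻¹ ≤ c u v ∧ c u v ≤ M)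
    (hc' : ∀ u v, G'.Adj u v → M⁻¹ ≤ c' u v ∧ c' u v ≤ M)
    (φ : V → V') (α β : ℝ) (hα : 0 < α) (hβ : 0 < β)
    (hlow : ∀ u v, α⁻¹ * (G.dist u v : ℝ) - β ≤ (G'.dist (φ u) (φ v) : ℝ))
    (hupp : ∀ u v, (G'.dist (φ u) (φ v) : ℝ) ≤ α * (G.dist u v : ℝ) + β)
    (hsurj : ∀ v' : V', ∃ v : V, (G'.dist (φ v) v' : ℝ) ≤ β) :
    ∃ C : ℝ≥0∞, 0 < C ∧ C < ⊤ ∧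
      ∀ A B : Set V, freeEffCond G c A B ≤ C * freeEffCond G' c' (φ '' A) (φ '' B) := by
  classical
  have hM0 : (0 : ℝ) < M := lt_of_lt_of_le one_pos hM
  -- the constant `k`: adjacent vertices are mapped to vertices at distance at most `k`
  set k : ℕ := ⌈α + β⌉₊ with hk_def
  have hk1 : 1 ≤ k := by
    rw [hk_def]
    exact Nat.one_le_iff_ne_zero.mpr (by positivity)
  have hk : ∀ u v, G.Adj u v → G'.dist (φ u) (φ v) ≤ k := by
    intro u v huv
    have h1 : G.dist u v = 1 := SimpleGraph.dist_eq_one_iff_adj.mpr huv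
    have h2 := hupp u v
    rw [h1] at h2
    have h3 : (G'.dist (φ u) (φ v) : ℝ) ≤ (k : ℝ) := by
      calc (G'.dist (φ u) (φ v) : ℝ) ≤ α * (1 : ℕ) + β := h2
        _ = α + β := by push_cast; ring
        _ ≤ (k : ℝ) := Nat.le_ceil _
    exact_mod_cast h3
  -- the radius `r`
  set r : ℕ := ⌈α * (2 * (k : ℝ) + β)⌉₊ with hr_def
  have hr : ∀ (x : V') (u₁ u₂ : V), G'.dist x (φ u₁) ≤ k → G'.dist x (φ u₂) ≤ k →
      G.dist u₁ u₂ ≤ r := by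
    intro x u₁ u₂ h1 h2
    have htr : G'.dist (φ u₁) (φ u₂) ≤ 2 * k := by
      calc G'.dist (φ u₁) (φ u₂) ≤ G'.dist (φ u₁) x + G'.dist x (φ u₂) :=
            hG'.dist_triangle
        _ ≤ k + k := by rw [SimpleGraph.dist_comm]; omega
        _ = 2 * k := by ring
    have hlow' := hlow u₁ u₂
    have h2k : (G'.dist (φ u₁) (φ u₂) : ℝ) ≤ 2 * (k : ℝ) := by exact_mod_cast htr
    have h3 : α⁻¹ * (G.dist u₁ u₂ : ℝ) ≤ 2 * (k : ℝ) + β := by linarith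
    have h4 : α * (α⁻¹ * (G.dist u₁ u₂ : ℝ)) ≤ α * (2 * (k : ℝ) + β) :=
      mul_le_mul_of_nonneg_left h3 hα.le
    rw [← mul_assoc, mul_inv_cancel₀ hα.ne', one_mul] at h4
    have h5 : (G.dist u₁ u₂ : ℝ) ≤ (r : ℝ) := h4.trans (Nat.le_ceil _)
    exact_mod_cast h5
  -- the degree bound as a natural number
  set D : ℕ := ⌈M⌉₊ with hD_def
  have hdegD : ∀ v, G.degree v ≤ D := by
    intro v
    have : (G.degree v : ℝ) ≤ (D : ℝ) := (hdeg v).trans (Nat.le_ceil _)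
    exact_mod_cast this
  set N0 : ℕ := (D + 1) ^ r * (D + 1) ^ (r + 1) with hN0_def
  set C : ℝ≥0∞ := ENNReal.ofReal ((k : ℝ) * M ^ 2) * ((N0 : ℝ≥0∞) * (k : ℝ≥0∞)) with hC_def
  have hC0 : C ≠ 0 := by
    rw [hC_def]
    refine mul_ne_zero ?_ (mul_ne_zero ?_ ?_)
    · refine (ENNReal.ofReal_pos.mpr ?_).ne'
      have hkR : (0 : ℝ) < (k : ℝ) := by exact_mod_cast hk1
      positivity
    · exact Nat.cast_ne_zero.mpr (by positivity)
    · exact Nat.cast_ne_zero.mpr (by omega)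
  have hCt : C ≠ ⊤ := by
    rw [hC_def]
    exact ENNReal.mul_ne_top ENNReal.ofReal_ne_top
      (ENNReal.mul_ne_top (ENNReal.natCast_ne_top _) (ENNReal.natCast_ne_top _))
  -- the key estimate
  have key : ∀ f : V' → ℝ,
      dirichletEnergy G c (f ∘ φ) ≤ C * dirichletEnergy G' c' f := by
    intro f
    set t' : V' × V' → ℝ≥0∞ := fun q =>
      if G'.Adj q.1 q.2 then ENNReal.ofReal (c' q.1 q.2 * (f q.1 - f q.2) ^ 2) else 0
      with ht'_def
    set tG : V × V → ℝ≥0∞ := fun p =>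
      if G.Adj p.1 p.2 then
        ENNReal.ofReal (c p.1 p.2 * ((f ∘ φ) p.1 - (f ∘ φ) p.2) ^ 2) else 0
      with htG_def
    choose w hw using fun p : V × V => hG'.exists_walk_length_eq_dist (φ p.1) (φ p.2)
    set F : V × V → V' × V' → ℝ≥0∞ := fun p q =>
      if G.Adj p.1 p.2 then
        ((w p).darts.map (fun d => if d.toProd = q then t' q else 0)).sum else 0
      with hF_def
    set g : (q : V × V) → G'.Dart → ℝ :=
      fun _ d => c' d.fst d.snd * (f d.fst - f d.snd) ^ 2 with hg_def
    have hg0 : ∀ (p : V × V) (d : G'.Dart), 0 ≤ g p d := by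
      intro p d
      have h1 := (hc' _ _ d.adj).1
      have h2 : (0 : ℝ) ≤ M⁻¹ := by positivity
      have h3 : 0 ≤ c' d.fst d.snd := le_trans h2 h1
      have := sq_nonneg (f d.fst - f d.snd)
      simp only [hg_def]
      positivity
    have step1 : ∀ p : V × V, tG p ≤ ENNReal.ofReal ((k : ℝ) * M ^ 2) * ∑' q, F p q := by
      intro p
      by_cases hadj : G.Adj p.1 p.2
      · have hfun : (t' ∘ fun d : G'.Dart => d.toProd)
            = fun d : G'.Dart => ENNReal.ofReal (g p d) := by
          funext d
          simp only [Function.comp, ht'_def, hg_def]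
          rw [if_pos d.adj]
        have hF : (∑' q, F p q)
            = ((w p).darts.map (fun d => ENNReal.ofReal (g p d))).sum := by
          simp only [hF_def, if_pos hadj]
          rw [← hfun]
          exact tsum_list_ite ((w p).darts) (fun d => d.toProd) t' _
        rw [hF]
        have hsum : ((w p).darts.map (fun d => ENNReal.ofReal (g p d))).sum
            = ENNReal.ofReal (((w p).darts.map (g p)).sum) := by
          rw [ofReal_list_sum _ (by
            intro x hx
            obtain ⟨d, _, rfl⟩ := List.mem_map.mp hx
            exact hg0 p d), List.map_map]
          rfl
        rw [hsum, ← ENNReal.ofReal_mul (by positivity : (0 : ℝ) ≤ (k : ℝ) * M ^ 2)]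
        simp only [htG_def, if_pos hadj, Function.comp_apply]
        apply ENNReal.ofReal_le_ofReal
        -- the real inequality
        have htel : f (φ p.1) - f (φ p.2)
            = ((w p).darts.map (fun d => f d.fst - f d.snd)).sum := walk_telescope f (w p)
        have hlenk : (((w p).darts.length : ℕ) : ℝ) ≤ (k : ℝ) := by
          have h2 : (w p).darts.length ≤ k := by
            rw [SimpleGraph.Walk.length_darts, hw p]
            exact hk p.1 p.2 hadj
          exact_mod_cast h2
        have hsqnn : 0 ≤ ((w p).darts.map (fun d => (f d.fst - f d.snd) ^ 2)).sum :=
          List.sum_nonneg (by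
            intro x hx
            obtain ⟨d, _, rfl⟩ := List.mem_map.mp hx
            positivity)
        have hCS : (f (φ p.1) - f (φ p.2)) ^ 2
            ≤ (k : ℝ) * ((w p).darts.map (fun d => (f d.fst - f d.snd) ^ 2)).sum := by
          rw [htel]
          have h1 := list_sq_sum_le ((w p).darts.map (fun d => f d.fst - f d.snd))
          rw [List.length_map, List.map_map] at h1
          simp only [Function.comp_def] at h1
          exact h1.trans (mul_le_mul_of_nonneg_right hlenk hsqnn)
        have hsum_le : ((w p).darts.map (fun d => (f d.fst - f d.snd) ^ 2)).sum
            ≤ M * ((w p).darts.map (g p)).sum := by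
          have h2 : ((w p).darts.map (fun d => (f d.fst - f d.snd) ^ 2)).sum
              ≤ ((w p).darts.map (fun d => M * g p d)).sum := by
            apply List.sum_le_sum
            intro d _
            have h1 := (hc' _ _ d.adj).1
            have hMc : 1 ≤ M * c' d.fst d.snd := by
              calc (1 : ℝ) = M * M⁻¹ := (mul_inv_cancel₀ hM0.ne').symm
                _ ≤ M * c' d.fst d.snd := mul_le_mul_of_nonneg_left h1 hM0.le
            have hsq := sq_nonneg (f d.fst - f d.snd)
            simp only [hg_def]
            nlinarith
          exact h2.trans_eq (List.sum_map_mul_left _ _ _)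
        have hgs : 0 ≤ ((w p).darts.map (g p)).sum :=
          List.sum_nonneg (by
            intro x hx
            obtain ⟨d, _, rfl⟩ := List.mem_map.mp hx
            exact hg0 p d)
        have hc2 := (hc _ _ hadj).2
        calc c p.1 p.2 * (f (φ p.1) - f (φ p.2)) ^ 2
            ≤ M * (f (φ p.1) - f (φ p.2)) ^ 2 :=
              mul_le_mul_of_nonneg_right hc2 (sq_nonneg _)
          _ ≤ M * ((k : ℝ) * (M * ((w p).darts.map (g p)).sum)) := by
              refine mul_le_mul_of_nonneg_left ?_ hM0.le
              refine hCS.trans (mul_le_mul_of_nonneg_left hsum_le (by positivity))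
          _ = (k : ℝ) * M ^ 2 * ((w p).darts.map (g p)).sum := by ring
      · simp only [htG_def, if_neg hadj]
        exact zero_le
    have step2 : ∀ q : V' × V', (∑' p : V × V, F p q)
        ≤ (N0 : ℝ≥0∞) * ((k : ℝ≥0∞) * t' q) := by
      intro q
      by_cases hz : ∀ p : V × V, F p q = 0
      · have h0 : (∑' p : V × V, F p q) = 0 := by simp [hz]
        rw [h0]; exact zero_le
      · push_neg at hz
        obtain ⟨p₀, hp₀⟩ := hz
        have hFne : ∀ p : V × V, F p q ≠ 0 →
            G.Adj p.1 p.2 ∧ G'.dist q.1 (φ p.1) ≤ k := by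
          intro p hp
          have hadj : G.Adj p.1 p.2 := by
            by_contra h
            exact hp (by simp [hF_def, h])
          refine ⟨hadj, ?_⟩
          have hex : ∃ d ∈ (w p).darts, d.toProd = q := by
            by_contra h
            push_neg at h
            apply hp
            simp only [hF_def, if_pos hadj]
            apply List.sum_eq_zero
            intro x hx
            obtain ⟨d, hd, rfl⟩ := List.mem_map.mp hx
            rw [if_neg (h d hd)]
          obtain ⟨d, hd, hdq⟩ := hex
          have h1 : G'.dist (φ p.1) d.fst ≤ (w p).length := dist_start_dart_fst_le (w p) hd
          have h2 : (w p).length ≤ k := by rw [hw p]; exact hk p.1 p.2 hadj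
          have h3 : q.1 = d.fst := by rw [← hdq]
          rw [SimpleGraph.dist_comm, h3]
          omega
        obtain ⟨hadj₀, hq₀⟩ := hFne p₀ hp₀
        obtain ⟨s1, hs1, hcard1⟩ := ball_card hG D hdegD p₀.1 r
        obtain ⟨s2, hs2, hcard2⟩ := ball_card hG D hdegD p₀.1 (r + 1)
        have hsupp : ∀ p : V × V, p ∉ s1 ×ˢ s2 → F p q = 0 := by
          intro p hp
          by_contra hne
          obtain ⟨hadj, hq1⟩ := hFne p hne
          apply hp
          rw [Finset.mem_product]
          refine ⟨hs1 _ (hr q.1 p₀.1 p.1 hq₀ hq1), hs2 _ ?_⟩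
          have hd1 : G.dist p.1 p.2 = 1 := SimpleGraph.dist_eq_one_iff_adj.mpr hadj
          have htri := hG.dist_triangle (u := p₀.1) (v := p.1) (w := p.2)
          have hrr := hr q.1 p₀.1 p.1 hq₀ hq1
          omega
        have hbound : ∀ p : V × V, F p q ≤ (k : ℝ≥0∞) * t' q := by
          intro p
          by_cases hadj : G.Adj p.1 p.2
          · simp only [hF_def, if_pos hadj]
            refine (list_sum_le_length_mul ((w p).darts)
              (fun d => if d.toProd = q then t' q else 0) (t' q)
              (by intro d _; by_cases h : d.toProd = q <;> simp [h])).trans ?_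
            have h2 : (w p).darts.length ≤ k := by
              rw [SimpleGraph.Walk.length_darts, hw p]
              exact hk p.1 p.2 hadj
            exact mul_le_mul_left (by exact_mod_cast h2) _
          · simp only [hF_def, if_neg hadj]
            exact zero_le
        calc (∑' p : V × V, F p q) = ∑ p ∈ s1 ×ˢ s2, F p q :=
              tsum_eq_sum hsupp
          _ ≤ ∑ _p ∈ s1 ×ˢ s2, (k : ℝ≥0∞) * t' q := Finset.sum_le_sum fun p _ => hbound p
          _ = ((s1 ×ˢ s2).card : ℝ≥0∞) * ((k : ℝ≥0∞) * t' q) := by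
              rw [Finset.sum_const, nsmul_eq_mul]
          _ ≤ (N0 : ℝ≥0∞) * ((k : ℝ≥0∞) * t' q) := by
              refine mul_le_mul_left ?_ _
              have hcc : (s1 ×ˢ s2).card ≤ N0 := by
                rw [Finset.card_product]
                exact Nat.mul_le_mul hcard1 hcard2
              exact_mod_cast hcc
    have main : (∑' p : V × V, tG p) ≤ C * ∑' q : V' × V', t' q := by
      calc (∑' p : V × V, tG p)
          ≤ ∑' p : V × V, ENNReal.ofReal ((k : ℝ) * M ^ 2) * ∑' q, F p q :=
            ENNReal.tsum_le_tsum step1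
        _ = ENNReal.ofReal ((k : ℝ) * M ^ 2) * ∑' p, ∑' q, F p q := ENNReal.tsum_mul_left
        _ = ENNReal.ofReal ((k : ℝ) * M ^ 2) * ∑' q, ∑' p, F p q := by
            rw [ENNReal.tsum_comm]
        _ ≤ ENNReal.ofReal ((k : ℝ) * M ^ 2) *
              ∑' q, (N0 : ℝ≥0∞) * ((k : ℝ≥0∞) * t' q) :=
            mul_le_mul_right (ENNReal.tsum_le_tsum step2) _
        _ = C * ∑' q : V' × V', t' q := by
            rw [ENNReal.tsum_mul_left, ENNReal.tsum_mul_left, hC_def]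
            ring
    have hED : dirichletEnergy G c (f ∘ φ) = (1 / 2 : ℝ≥0∞) * ∑' p : V × V, tG p := rfl
    have hED' : dirichletEnergy G' c' f = (1 / 2 : ℝ≥0∞) * ∑' q : V' × V', t' q := rfl
    rw [hED, hED', ← mul_assoc, mul_comm C (1 / 2 : ℝ≥0∞), mul_assoc]
    exact mul_le_mul_right main _
  refine ⟨C, pos_iff_ne_zero.mpr hC0, lt_top_iff_ne_top.mpr hCt, fun A B => ?_⟩
  have hmain : ∀ f : V' → ℝ, (∀ a ∈ φ '' A, f a = 1) → (∀ b ∈ φ '' B, f b = 0) →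
      freeEffCond G c A B ≤ C * dirichletEnergy G' c' f := by
    intro f h1 h2
    refine le_trans ?_ (key f)
    have h1' : ∀ a ∈ A, (f ∘ φ) a = 1 := fun a ha => h1 (φ a) ⟨a, ha, rfl⟩
    have h2' : ∀ b ∈ B, (f ∘ φ) b = 0 := fun b hb => h2 (φ b) ⟨b, hb, rfl⟩
    calc freeEffCond G c A B
        ≤ ⨅ (_ : ∀ a ∈ A, (f ∘ φ) a = 1) (_ : ∀ b ∈ B, (f ∘ φ) b = 0),
            dirichletEnergy G c (f ∘ φ) := iInf_le _ (f ∘ φ)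
      _ ≤ dirichletEnergy G c (f ∘ φ) := by
          refine le_trans (iInf_le _ h1') (iInf_le _ h2')
  have hdiv : freeEffCond G c A B / C ≤ freeEffCond G' c' (φ '' A) (φ '' B) := by
    refine le_iInf fun f => le_iInf fun h1 => le_iInf fun h2 => ?_
    rw [ENNReal.div_le_iff_le_mul (Or.inl hC0) (Or.inl hCt), mul_comm]
    exact hmain f h1 h2
  have := (ENNReal.div_le_iff_le_mul (Or.inl hC0) (Or.inl hCt)).mp hdiv
  rwa [mul_comm] at this
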